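/- arXiv:2602.00596 — 2 statements merged into one kernel-verified Lean document; each statement's English description precedes it below -/
import Mathlib

section
/- Let T be a nonnegative real-valued random variable whose distribution gives positive probability to at least two distinct strictly positive values, such that E[T^n] is finite and strictly positive for every natural number n. Let ψ : [0,∞) → [0,∞) be a strictly decreasing function such that E[ψ(T)·T^n] is finite and strictly positive for every n. Define R_n = E[ψ(T)·T^n] / E[T^n]. Then the sequence (R_n) is strictly decreasing: for every n ≥ 0, R_{n+1} < R_n. -/
open MeasureTheory

/-- **Strictly decreasing kernel-to-base moment ratios.**
If `T ≥ 0` is non-degenerate in the sense that the support of its law contains two distinct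
strictly positive points (every neighborhood of each of them has positive probability),
its moments `E[T^n]` are finite and strictly positive, and `ψ : [0,∞) → [0,∞)` is strictly
decreasing with `E[ψ(T)·T^n]` finite and strictly positive for all `n`, then
`R n = E[ψ(T)·T^n] / E[T^n]` satisfies `R (n+1) < R n` for every `n`. -/
theorem keat_moment_ratio_strictAnti
    {Ω : Type*} {mΩ : MeasurableSpace Ω} (μ : Measure Ω) [IsProbabilityMeasure μ]
    (T : Ω → ℝ) (hT_nonneg : ∀ ω, 0 ≤ T ω)
    (h_nondeg : ∃ a b : ℝ, 0 < a ∧ a < b ∧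
      (∀ ε > (0 : ℝ), 0 < μ {ω | |T ω - a| < ε}) ∧
      (∀ ε > (0 : ℝ), 0 < μ {ω | |T ω - b| < ε}))
    (ψ : ℝ → ℝ)
    (hψ_nonneg : ∀ t, 0 ≤ t → 0 ≤ ψ t)
    (hψ_strictAnti : ∀ s t, 0 ≤ s → s < t → ψ t < ψ s)
    (h_int : ∀ n : ℕ, Integrable (fun ω => T ω ^ n) μ)
    (h_pos : ∀ n : ℕ, 0 < ∫ ω, T ω ^ n ∂μ)
    (h_int' : ∀ n : ℕ, Integrable (fun ω => ψ (T ω) * T ω ^ n) μ)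
    (h_pos' : ∀ n : ℕ, 0 < ∫ ω, ψ (T ω) * T ω ^ n ∂μ)
    (R : ℕ → ℝ)
    (hR : ∀ n : ℕ, R n = (∫ ω, ψ (T ω) * T ω ^ n ∂μ) / (∫ ω, T ω ^ n ∂μ)) :
    ∀ n : ℕ, R (n + 1) < R n := by
  intro n
  obtain ⟨a, b, ha, hab, hna, hnb⟩ := h_nondeg
  have hanti : ∀ s t : ℝ, 0 ≤ s → s ≤ t → ψ t ≤ ψ s := by
    intro s t hs hst
    rcases hst.eq_or_lt with h | h
    · simp [h]
    · exact (hψ_strictAnti s t hs h).le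
  -- measurable versions of `T` and `ψ ∘ T`
  have hgT : AEMeasurable T μ := by
    have := (h_int 1).aemeasurable
    simpa using this
  have hfT : AEMeasurable (fun ω => ψ (T ω)) μ := by
    have := (h_int' 0).aemeasurable
    simpa using this
  obtain ⟨T', hT'meas, hT'nonneg, hT'ae⟩ :
      ∃ T' : Ω → ℝ, Measurable T' ∧ (∀ ω, 0 ≤ T' ω) ∧ T' =ᵐ[μ] T := by
    refine ⟨fun ω => |hgT.mk T ω|, hgT.measurable_mk.abs, fun ω => abs_nonneg _, ?_⟩
    filter_upwards [hgT.ae_eq_mk] with ω h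
    simp [← h, abs_of_nonneg (hT_nonneg ω)]
  obtain ⟨f', hf'meas, hf'ae⟩ :
      ∃ f' : Ω → ℝ, Measurable f' ∧ (fun ω => ψ (T ω)) =ᵐ[μ] f' :=
    ⟨hfT.mk _, hfT.measurable_mk, hfT.ae_eq_mk⟩
  have hE : ∀ᵐ ω ∂μ, f' ω = ψ (T' ω) ∧ T' ω = T ω := by
    filter_upwards [hf'ae, hT'ae] with ω h1 h2
    exact ⟨by rw [h2]; exact h1.symm, h2⟩
  -- the good parameters
  set ε : ℝ := min (a / 2) ((b - a) / 4) with hεdef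
  have hε : 0 < ε := lt_min (by linarith) (by linarith)
  have hεa : ε ≤ a / 2 := min_le_left _ _
  have hεb : ε ≤ (b - a) / 4 := min_le_right _ _
  have haL : 0 < a - ε := by linarith
  have hsep : a + ε < b - ε := by linarith
  have haR : (0 : ℝ) ≤ a + ε := by linarith
  have hbL : (0 : ℝ) ≤ b - ε := by linarith
  set c : ℝ := (ψ (a + ε) - ψ (b - ε)) * ((b - ε) - (a + ε)) * ((a - ε) ^ n * (b - ε) ^ n)
    with hcdef
  have hdψ : 0 < ψ (a + ε) - ψ (b - ε) := sub_pos.2 (hψ_strictAnti _ _ haR hsep)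
  have hd : 0 < (b - ε) - (a + ε) := by linarith
  have hc : 0 < c := by
    apply mul_pos (mul_pos hdψ hd)
    exact mul_pos (pow_pos haL n) (pow_pos (lt_of_le_of_lt haR hsep) n)
  -- the rectangle
  set S1 : Set Ω := {ω | |T' ω - a| < ε} with hS1def
  set S2 : Set Ω := {ω | |T' ω - b| < ε} with hS2def
  have hMS1 : MeasurableSet S1 := measurableSet_lt ((hT'meas.sub measurable_const).abs) measurable_const
  have hMS2 : MeasurableSet S2 := measurableSet_lt ((hT'meas.sub measurable_const).abs) measurable_const
  have hμS1 : 0 < μ S1 := by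
    have : μ S1 = μ {ω | |T ω - a| < ε} := by
      apply measure_congr
      rw [Filter.eventuallyEq_set]
      filter_upwards [hT'ae] with ω h
      simp [hS1def, h]
    rw [this]; exact hna ε hε
  have hμS2 : 0 < μ S2 := by
    have : μ S2 = μ {ω | |T ω - b| < ε} := by
      apply measure_congr
      rw [Filter.eventuallyEq_set]
      filter_upwards [hT'ae] with ω h
      simp [hS2def, h]
    rw [this]; exact hnb ε hε
  -- product measure setup
  set ν : Measure (Ω × Ω) := μ.prod μ with hνdef
  set F : Ω × Ω → ℝ := fun p =>
    (ψ (T p.1) - ψ (T p.2)) * (T p.1 - T p.2) * (T p.1 ^ n * T p.2 ^ n) with hFdef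
  set F' : Ω × Ω → ℝ := fun p =>
    (f' p.1 - f' p.2) * (T' p.1 - T' p.2) * (T' p.1 ^ n * T' p.2 ^ n) with hF'def
  -- almost everywhere on the product, both coordinates are good
  set N : Set Ω := {ω | ¬ (f' ω = ψ (T' ω) ∧ T' ω = T ω)} with hNdef
  have hN : μ N = 0 := hE
  have hprodae : ∀ᵐ p ∂ν, (f' p.1 = ψ (T' p.1) ∧ T' p.1 = T p.1) ∧
      (f' p.2 = ψ (T' p.2) ∧ T' p.2 = T p.2) := by
    rw [ae_iff]
    apply measure_mono_null (t := N ×ˢ (Set.univ : Set Ω) ∪ (Set.univ : Set Ω) ×ˢ N)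
    · intro p hp
      simp only [Set.mem_setOf_eq, not_and_or] at hp
      rcases hp with hp | hp
      · exact Or.inl ⟨not_and_or.mpr hp, Set.mem_univ _⟩
      · exact Or.inr ⟨Set.mem_univ _, not_and_or.mpr hp⟩
    · refine le_antisymm ((measure_union_le _ _).trans ?_) zero_le
      rw [Measure.prod_prod, Measure.prod_prod, hN]
      simp
  have hFF' : F' =ᵐ[ν] F := by
    filter_upwards [hprodae] with p hp
    simp only [hFdef, hF'def]
    rw [hp.1.1, hp.1.2, hp.2.1, hp.2.2]
  -- integrability of F and its integral value
  have hF1 : Integrable (fun p : Ω × Ω => (ψ (T p.1) * T p.1 ^ (n + 1)) * T p.2 ^ n) ν :=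
    (h_int' (n + 1)).mul_prod (h_int n)
  have hF2 : Integrable (fun p : Ω × Ω => (ψ (T p.1) * T p.1 ^ n) * T p.2 ^ (n + 1)) ν :=
    (h_int' n).mul_prod (h_int (n + 1))
  have hF3 : Integrable (fun p : Ω × Ω => T p.1 ^ (n + 1) * (ψ (T p.2) * T p.2 ^ n)) ν :=
    (h_int (n + 1)).mul_prod (h_int' n)
  have hF4 : Integrable (fun p : Ω × Ω => T p.1 ^ n * (ψ (T p.2) * T p.2 ^ (n + 1))) ν :=
    (h_int n).mul_prod (h_int' (n + 1))
  have hFeq : F = fun p : Ω × Ω =>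
      ((ψ (T p.1) * T p.1 ^ (n + 1)) * T p.2 ^ n - (ψ (T p.1) * T p.1 ^ n) * T p.2 ^ (n + 1)
        - T p.1 ^ (n + 1) * (ψ (T p.2) * T p.2 ^ n))
        + T p.1 ^ n * (ψ (T p.2) * T p.2 ^ (n + 1)) := by
    funext p
    simp only [hFdef]
    ring
  have hF12 : Integrable (fun p : Ω × Ω =>
      (ψ (T p.1) * T p.1 ^ (n + 1)) * T p.2 ^ n
      - (ψ (T p.1) * T p.1 ^ n) * T p.2 ^ (n + 1)) ν := hF1.sub hF2
  have hF123 : Integrable (fun p : Ω × Ω =>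
      (ψ (T p.1) * T p.1 ^ (n + 1)) * T p.2 ^ n
      - (ψ (T p.1) * T p.1 ^ n) * T p.2 ^ (n + 1)
      - T p.1 ^ (n + 1) * (ψ (T p.2) * T p.2 ^ n)) ν := hF12.sub hF3
  have hFint : Integrable F ν := by
    rw [hFeq]; exact hF123.add hF4
  have hFval : ∫ p, F p ∂ν =
      (∫ ω, ψ (T ω) * T ω ^ (n + 1) ∂μ) * (∫ ω, T ω ^ n ∂μ)
      - (∫ ω, ψ (T ω) * T ω ^ n ∂μ) * (∫ ω, T ω ^ (n + 1) ∂μ)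
      - (∫ ω, T ω ^ (n + 1) ∂μ) * (∫ ω, ψ (T ω) * T ω ^ n ∂μ)
      + (∫ ω, T ω ^ n ∂μ) * (∫ ω, ψ (T ω) * T ω ^ (n + 1) ∂μ) := by
    have e1 : ∫ p : Ω × Ω, (ψ (T p.1) * T p.1 ^ (n + 1)) * T p.2 ^ n ∂ν
        = (∫ ω, ψ (T ω) * T ω ^ (n + 1) ∂μ) * ∫ ω, T ω ^ n ∂μ := by
      rw [hνdef]
      exact integral_prod_mul (fun ω => ψ (T ω) * T ω ^ (n + 1)) (fun ω => T ω ^ n)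
    have e2 : ∫ p : Ω × Ω, (ψ (T p.1) * T p.1 ^ n) * T p.2 ^ (n + 1) ∂ν
        = (∫ ω, ψ (T ω) * T ω ^ n ∂μ) * ∫ ω, T ω ^ (n + 1) ∂μ := by
      rw [hνdef]
      exact integral_prod_mul (fun ω => ψ (T ω) * T ω ^ n) (fun ω => T ω ^ (n + 1))
    have e3 : ∫ p : Ω × Ω, T p.1 ^ (n + 1) * (ψ (T p.2) * T p.2 ^ n) ∂ν
        = (∫ ω, T ω ^ (n + 1) ∂μ) * ∫ ω, ψ (T ω) * T ω ^ n ∂μ := by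
      rw [hνdef]
      exact integral_prod_mul (fun ω => T ω ^ (n + 1)) (fun ω => ψ (T ω) * T ω ^ n)
    have e4 : ∫ p : Ω × Ω, T p.1 ^ n * (ψ (T p.2) * T p.2 ^ (n + 1)) ∂ν
        = (∫ ω, T ω ^ n ∂μ) * ∫ ω, ψ (T ω) * T ω ^ (n + 1) ∂μ := by
      rw [hνdef]
      exact integral_prod_mul (fun ω => T ω ^ n) (fun ω => ψ (T ω) * T ω ^ (n + 1))
    simp only [hFeq]
    rw [integral_add hF123 hF4, integral_sub hF12 hF3, integral_sub hF1 hF2, e1, e2, e3, e4]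
  -- pointwise a.e. bound
  have hae : ∀ᵐ p ∂ν, F' p ≤ Set.indicator (S1 ×ˢ S2) (fun _ => -c) p := by
    filter_upwards [hprodae] with p hp
    obtain ⟨⟨hp1f, _⟩, ⟨hp2f, _⟩⟩ := hp
    set s := T' p.1 with hsdef
    set t := T' p.2 with htdef
    have hs0 : 0 ≤ s := hT'nonneg _
    have ht0 : 0 ≤ t := hT'nonneg _
    have hF'val : F' p = (ψ s - ψ t) * (s - t) * (s ^ n * t ^ n) := by
      simp only [hF'def]; rw [hp1f, hp2f]
    by_cases hmem : p ∈ S1 ×ˢ S2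
    · rw [Set.indicator_of_mem hmem]
      obtain ⟨hm1, hm2⟩ := hmem
      rw [hS1def, Set.mem_setOf_eq, abs_lt] at hm1
      rw [hS2def, Set.mem_setOf_eq, abs_lt] at hm2
      have hsle : s ≤ a + ε := by rw [hsdef]; linarith [hm1.2]
      have hsge : a - ε ≤ s := by rw [hsdef]; linarith [hm1.1]
      have htge : b - ε ≤ t := by rw [htdef]; linarith [hm2.1]
      have h1' : ψ (a + ε) - ψ (b - ε) ≤ ψ s - ψ t :=
        sub_le_sub (hanti s (a + ε) hs0 hsle) (hanti (b - ε) t hbL htge)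
      have h2' : (b - ε) - (a + ε) ≤ t - s := by linarith
      have h3' : (a - ε) ^ n ≤ s ^ n := pow_le_pow_left₀ haL.le hsge n
      have h4' : (b - ε) ^ n ≤ t ^ n := pow_le_pow_left₀ hbL htge n
      have step1 : (ψ (a + ε) - ψ (b - ε)) * ((b - ε) - (a + ε)) ≤ (ψ s - ψ t) * (t - s) :=
        mul_le_mul h1' h2' hd.le (le_trans hdψ.le h1')
      have step2 : (a - ε) ^ n * (b - ε) ^ n ≤ s ^ n * t ^ n :=
        mul_le_mul h3' h4' (pow_nonneg hbL n) (pow_nonneg hs0 n)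
      have step3 : c ≤ (ψ s - ψ t) * (t - s) * (s ^ n * t ^ n) := by
        rw [hcdef]
        exact mul_le_mul step1 step2
          (mul_nonneg (pow_nonneg haL.le n) (pow_nonneg hbL n))
          (le_trans (mul_pos hdψ hd).le step1)
      have hswap : (ψ s - ψ t) * (s - t) * (s ^ n * t ^ n)
          = -((ψ s - ψ t) * (t - s) * (s ^ n * t ^ n)) := by ring
      rw [hF'val, hswap]
      linarith
    · rw [Set.indicator_of_notMem hmem, hF'val]
      have hst : (ψ s - ψ t) * (s - t) ≤ 0 := by
        rcases lt_trichotomy s t with h | h | h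
        · have h' := hψ_strictAnti s t hs0 h
          exact mul_nonpos_of_nonneg_of_nonpos (by linarith) (by linarith)
        · simp [h]
        · have h' := hψ_strictAnti t s ht0 h
          exact mul_nonpos_of_nonpos_of_nonneg (by linarith) (by linarith)
      exact mul_nonpos_of_nonpos_of_nonneg hst
        (mul_nonneg (pow_nonneg hs0 n) (pow_nonneg ht0 n))
  -- conclude that the double integral is strictly negative
  have hindint : Integrable (Set.indicator (S1 ×ˢ S2) (fun _ => -c)) ν :=
    (integrable_const (-c)).indicator (hMS1.prod hMS2)
  have hF'int : Integrable F' ν := hFint.congr hFF'.symm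
  have hD : ∫ p, F p ∂ν < 0 := by
    have h2 : ∫ p, F' p ∂ν ≤ ∫ p, Set.indicator (S1 ×ˢ S2) (fun _ => -c) p ∂ν :=
      integral_mono_ae hF'int hindint hae
    have h3 : ∫ p, Set.indicator (S1 ×ˢ S2) (fun _ => -c) p ∂ν
        = (ν (S1 ×ˢ S2)).toReal • (-c) := integral_indicator_const _ (hMS1.prod hMS2)
    have h4 : 0 < (ν (S1 ×ˢ S2)).toReal := by
      apply ENNReal.toReal_pos
      · rw [hνdef, Measure.prod_prod]
        exact (ENNReal.mul_pos hμS1.ne' hμS2.ne').ne'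
      · exact measure_ne_top _ _
    have h5 : (ν (S1 ×ˢ S2)).toReal • (-c) < 0 := by
      rw [smul_eq_mul]
      exact mul_neg_of_pos_of_neg h4 (by linarith)
    calc ∫ p, F p ∂ν = ∫ p, F' p ∂ν := integral_congr_ae hFF'.symm
      _ ≤ ∫ p, Set.indicator (S1 ×ˢ S2) (fun _ => -c) p ∂ν := h2
      _ = (ν (S1 ×ˢ S2)).toReal • (-c) := h3
      _ < 0 := h5
  -- finish
  have hkey : (∫ ω, ψ (T ω) * T ω ^ (n + 1) ∂μ) * (∫ ω, T ω ^ n ∂μ)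
      < (∫ ω, ψ (T ω) * T ω ^ n ∂μ) * (∫ ω, T ω ^ (n + 1) ∂μ) := by
    rw [hFval] at hD
    linarith
  rw [hR n, hR (n + 1), div_lt_div_iff₀ (h_pos (n + 1)) (h_pos n)]
  exact hkey
end

section
/- Let T be a nonnegative real-valued random variable whose distribution has unbounded support (i.e., P(T > M) > 0 for every M > 0) and such that E[T^n] is finite for every natural number n. Let ψ : [0,∞) → [0,∞) be a monotonically non-increasing function with ψ(t) → 0 as t → ∞. Define R_n = E[ψ(T)·T^n] / E[T^n]. Then R_n → 0 as n → ∞. -/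
open MeasureTheory Filter

/-- **Vanishing of kernel-to-base moment ratios.**
If `T ≥ 0` has unbounded support (`P(T > M) > 0` for all `M > 0`) with all moments
`E[T^n]` finite, and `ψ : [0,∞) → [0,∞)` is monotonically non-increasing with
`ψ(t) → 0` as `t → ∞` (and `E[ψ(T)·T^n]` is a genuine expectation, i.e. integrable),
then `R n = E[ψ(T)·T^n] / E[T^n]` tends to `0` as `n → ∞`. -/
theorem keat_moment_ratio_tendsto_zero
    {Ω : Type*} {mΩ : MeasurableSpace Ω} (μ : Measure Ω) [IsProbabilityMeasure μ]
    (T : Ω → ℝ) (hT_nonneg : ∀ ω, 0 ≤ T ω)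
    (h_unbdd : ∀ M : ℝ, 0 < M → 0 < μ {ω | M < T ω})
    (ψ : ℝ → ℝ)
    (hψ_nonneg : ∀ t, 0 ≤ t → 0 ≤ ψ t)
    (hψ_anti : ∀ s t, 0 ≤ s → s ≤ t → ψ t ≤ ψ s)
    (hψ_lim : Tendsto ψ atTop (nhds 0))
    (h_int : ∀ n : ℕ, Integrable (fun ω => T ω ^ n) μ)
    (h_int' : ∀ n : ℕ, Integrable (fun ω => ψ (T ω) * T ω ^ n) μ)
    (R : ℕ → ℝ)
    (hR : ∀ n : ℕ, R n = (∫ ω, ψ (T ω) * T ω ^ n ∂μ) / (∫ ω, T ω ^ n ∂μ)) :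
    Tendsto R atTop (nhds 0) := by
  rw [Metric.tendsto_atTop]
  intro ε hε
  -- choose M with ψ M < ε/2
  obtain ⟨M₀, hM₀⟩ := Metric.tendsto_atTop.1 hψ_lim (ε / 2) (half_pos hε)
  set M : ℝ := max M₀ 1 with hMdef
  have hMpos : (0 : ℝ) < M := lt_of_lt_of_le one_pos (le_max_right _ _)
  have hψM : ψ M < ε / 2 := by
    have := hM₀ M (le_max_left _ _)
    rwa [Real.dist_eq, sub_zero, abs_of_nonneg (hψ_nonneg M hMpos.le)] at this
  -- positive probability of T > 2M
  set p : ℝ := (μ {ω | 2 * M < T ω}).toReal with hpdef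
  have hp : 0 < p :=
    ENNReal.toReal_pos (h_unbdd (2 * M) (by linarith)).ne' (measure_ne_top μ _)
  -- denominator lower bound
  have hD : ∀ n : ℕ, (2 * M) ^ n * p ≤ ∫ ω, T ω ^ n ∂μ := by
    intro n
    have hmark := mul_meas_ge_le_integral_of_nonneg
      (ae_of_all μ fun ω => pow_nonneg (hT_nonneg ω) n) (h_int n) ((2 * M) ^ n)
    refine le_trans ?_ hmark
    have hsub : {ω | 2 * M < T ω} ⊆ {x | (2 * M) ^ n ≤ T x ^ n} := by
      intro ω hω
      simp only [Set.mem_setOf_eq] at hω ⊢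
      exact pow_le_pow_left₀ (by linarith) hω.le n
    have hle : p ≤ (μ {x | (2 * M) ^ n ≤ T x ^ n}).toReal :=
      ENNReal.toReal_le_toReal (measure_ne_top μ _) (measure_ne_top μ _) |>.mpr
        (measure_mono hsub)
    exact mul_le_mul_of_nonneg_left hle (pow_nonneg (by linarith) n)
  have hDpos : ∀ n : ℕ, 0 < ∫ ω, T ω ^ n ∂μ := fun n =>
    lt_of_lt_of_le (by positivity) (hD n)
  -- numerator upper bound
  have hN : ∀ n : ℕ, (∫ ω, ψ (T ω) * T ω ^ n ∂μ) ≤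
      ψ 0 * M ^ n + ψ M * ∫ ω, T ω ^ n ∂μ := by
    intro n
    have hint2 : Integrable (fun ω => ψ 0 * M ^ n + ψ M * T ω ^ n) μ :=
      (integrable_const _).add ((h_int n).const_mul _)
    have hpt : ∀ ω, ψ (T ω) * T ω ^ n ≤ ψ 0 * M ^ n + ψ M * T ω ^ n := by
      intro ω
      rcases le_or_gt (T ω) M with h | h
      · have h1 : ψ (T ω) ≤ ψ 0 := hψ_anti 0 (T ω) le_rfl (hT_nonneg ω)
        have h2 : T ω ^ n ≤ M ^ n := pow_le_pow_left₀ (hT_nonneg ω) h n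
        have h3 : 0 ≤ ψ M * T ω ^ n :=
          mul_nonneg (hψ_nonneg M hMpos.le) (pow_nonneg (hT_nonneg ω) n)
        nlinarith [hψ_nonneg (T ω) (hT_nonneg ω), pow_nonneg (hT_nonneg ω) n]
      · have h1 : ψ (T ω) ≤ ψ M := hψ_anti M (T ω) hMpos.le h.le
        have h3 : 0 ≤ ψ 0 * M ^ n :=
          mul_nonneg (hψ_nonneg 0 le_rfl) (pow_nonneg hMpos.le n)
        nlinarith [pow_nonneg (hT_nonneg ω) n]
    calc (∫ ω, ψ (T ω) * T ω ^ n ∂μ)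
        ≤ ∫ ω, (ψ 0 * M ^ n + ψ M * T ω ^ n) ∂μ :=
          integral_mono (h_int' n) hint2 hpt
      _ = ψ 0 * M ^ n + ψ M * ∫ ω, T ω ^ n ∂μ := by
          rw [integral_add (integrable_const _) ((h_int n).const_mul _),
            integral_const, integral_const_mul, probReal_univ,
            smul_eq_mul, one_mul]
  -- R n ≤ ψ 0 / (2 ^ n * p) + ψ M
  have hRle : ∀ n : ℕ, R n ≤ ψ 0 / (2 ^ n * p) + ψ M := by
    intro n
    have hDn := hDpos n
    rw [hR n, div_le_iff₀ hDn]
    have h1 : ψ 0 * M ^ n ≤ (ψ 0 / (2 ^ n * p)) * ∫ ω, T ω ^ n ∂μ := by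
      have h2 : (2 : ℝ) ^ n * p * (ψ 0 * M ^ n) ≤ ψ 0 * ∫ ω, T ω ^ n ∂μ := by
        have := hD n
        rw [mul_pow] at this
        nlinarith [hψ_nonneg 0 le_rfl, pow_nonneg hMpos.le n,
          pow_pos (show (0:ℝ) < 2 by norm_num) n]
      rw [div_mul_eq_mul_div, le_div_iff₀ (by positivity)]
      linarith
    calc (∫ ω, ψ (T ω) * T ω ^ n ∂μ)
        ≤ ψ 0 * M ^ n + ψ M * ∫ ω, T ω ^ n ∂μ := hN n
      _ ≤ (ψ 0 / (2 ^ n * p)) * ∫ ω, T ω ^ n ∂μ + ψ M * ∫ ω, T ω ^ n ∂μ := by linarith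
      _ = (ψ 0 / (2 ^ n * p) + ψ M) * ∫ ω, T ω ^ n ∂μ := by ring
  have hRnonneg : ∀ n : ℕ, 0 ≤ R n := by
    intro n
    rw [hR n]
    exact div_nonneg (integral_nonneg fun ω =>
      mul_nonneg (hψ_nonneg (T ω) (hT_nonneg ω)) (pow_nonneg (hT_nonneg ω) n))
      (hDpos n).le
  -- the geometric part eventually small
  have hgeo : Tendsto (fun n : ℕ => ψ 0 / (2 ^ n * p)) atTop (nhds 0) := by
    have h2 : Tendsto (fun n : ℕ => (2 : ℝ) ^ n * p) atTop atTop :=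
      (tendsto_pow_atTop_atTop_of_one_lt (by norm_num)).atTop_mul_const hp
    exact Tendsto.div_atTop tendsto_const_nhds h2
  obtain ⟨N, hNe⟩ := (Metric.tendsto_atTop.1 hgeo (ε / 2) (half_pos hε))
  refine ⟨N, fun n hn => ?_⟩
  have hsmall : ψ 0 / (2 ^ n * p) < ε / 2 := by
    have := hNe n hn
    rwa [Real.dist_eq, sub_zero, abs_of_nonneg (div_nonneg (hψ_nonneg 0 le_rfl) (by positivity))] at this
  rw [Real.dist_eq, sub_zero, abs_of_nonneg (hRnonneg n)]
  calc R n ≤ ψ 0 / (2 ^ n * p) + ψ M := hRle n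
    _ < ε / 2 + ε / 2 := by linarith
    _ = ε := by ring
end
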